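/- The 8×8 substitution matrix M_P (for the all-up folding pattern) satisfies: M_P = M₊², M_P² has all entries strictly positive (so M_P is primitive), and the eigenvalues of M_P with multiplicity are 16, 4, 4, 4, 1, 1, 0, 0. -/
import Mathlib

def Mplus : Matrix (Fin 8) (Fin 8) ℚ :=
  !![0,0,0,0,1,1,1,1;
     0,0,1,3,0,0,0,0;
     0,2,2,0,0,0,0,0;
     3,1,0,0,0,0,0,0;
     1,1,1,1,0,0,0,0;
     0,0,0,0,0,0,1,3;
     0,0,0,0,0,2,2,0;
     0,0,0,0,3,1,0,0]

def Mminus : Matrix (Fin 8) (Fin 8) ℚ :=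
  !![0,0,1,3,0,0,0,0;
     0,2,2,0,0,0,0,0;
     3,1,0,0,0,0,0,0;
     0,0,0,0,1,1,1,1;
     0,0,0,0,0,0,1,3;
     0,0,0,0,0,2,2,0;
     0,0,0,0,3,1,0,0;
     1,1,1,1,0,0,0,0]

def MP : Matrix (Fin 8) (Fin 8) ℚ :=
  !![1,1,1,1,3,3,3,3;
     9,5,2,0,0,0,0,0;
     0,4,6,6,0,0,0,0;
     0,0,1,3,3,3,3,3;
     3,3,3,3,1,1,1,1;
     0,0,0,0,9,5,2,0;
     0,0,0,0,0,4,6,6;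
     3,3,3,3,0,0,1,3]

namespace MPaux

@[simp] lemma cons_val_five {α : Type*} {m : ℕ} (x : α) (u : Fin (m+5) → α) :
    Matrix.vecCons x u 5 =
      Matrix.vecHead (Matrix.vecTail (Matrix.vecTail (Matrix.vecTail (Matrix.vecTail u)))) := rfl

@[simp] lemma cons_val_six {α : Type*} {m : ℕ} (x : α) (u : Fin (m+6) → α) :
    Matrix.vecCons x u 6 =
      Matrix.vecHead (Matrix.vecTail (Matrix.vecTail (Matrix.vecTail
        (Matrix.vecTail (Matrix.vecTail u))))) := rfl

@[simp] lemma cons_val_seven {α : Type*} {m : ℕ} (x : α) (u : Fin (m+7) → α) :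
    Matrix.vecCons x u 7 =
      Matrix.vecHead (Matrix.vecTail (Matrix.vecTail (Matrix.vecTail
        (Matrix.vecTail (Matrix.vecTail (Matrix.vecTail u)))))) := rfl

open Polynomial Matrix in
lemma charpoly_conj {n : Type*} [Fintype n] [DecidableEq n] {R : Type*} [CommRing R]
    (P D Q : Matrix n n R) (h1 : P * Q = 1) :
    (P * D * Q).charpoly = D.charpoly := by
  have hPQ : (C : R →+* R[X]).mapMatrix P * (C : R →+* R[X]).mapMatrix Q = 1 := by
    rw [← _root_.map_mul, h1, _root_.map_one]
  have key : charmatrix (P * D * Q) =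
      (C : R →+* R[X]).mapMatrix P * charmatrix D * (C : R →+* R[X]).mapMatrix Q := by
    simp only [charmatrix, mul_sub, sub_mul, _root_.map_mul]
    congr 1
    rw [(scalar_commute (X : R[X]) (Commute.all _) ((C : R →+* R[X]).mapMatrix P)).symm.eq,
      Matrix.mul_assoc, hPQ, Matrix.mul_one]
  have hdet : ((C : R →+* R[X]).mapMatrix P).det * ((C : R →+* R[X]).mapMatrix Q).det = 1 := by
    rw [← det_mul, hPQ, det_one]
  rw [charpoly, key, det_mul, det_mul, charpoly]
  calc ((C : R →+* R[X]).mapMatrix P).det * (charmatrix D).det * ((C : R →+* R[X]).mapMatrix Q).det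
      = (charmatrix D).det *
        (((C : R →+* R[X]).mapMatrix P).det * ((C : R →+* R[X]).mapMatrix Q).det) := by ring
    _ = (charmatrix D).det := by rw [hdet, mul_one]

/-- Matrix whose columns are eigenvectors of `MP`. -/
def Pmat : Matrix (Fin 8) (Fin 8) ℚ :=
  !![1,0,1,-1,0,0,-1,0;
     1,-2,3,-3,1,0,3,0;
     1,1,-6,6,-2,0,-3,0;
     1,1,0,0,1,0,1,0;
     1,0,-1,1,0,0,0,-1;
     1,0,-3,-9,0,1,0,3;
     1,0,6,0,0,-2,0,-3;
     1,0,0,6,0,1,0,1]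

/-- Inverse of `Pmat`. -/
def Qmat : Matrix (Fin 8) (Fin 8) ℚ :=
  !![1/8,1/8,1/8,1/8,1/8,1/8,1/8,1/8;
     -1,-2/3,-1/3,0,1/2,1/2,1/2,1/2;
     -1/6,-1/6,-1/6,-1/6,1/12,5/36,7/36,1/4;
     1/12,1/12,1/12,1/12,-1/6,-1/9,-1/18,0;
     2,2/3,1/3,1,-1,-1,-1,-1;
     -1,-1,-1,-1,2,2/3,1/3,1;
     -9/8,-1/8,-1/8,-1/8,3/8,3/8,3/8,3/8;
     3/8,3/8,3/8,3/8,-9/8,-1/8,-1/8,-1/8]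

def Dvec : Fin 8 → ℚ := ![16,4,4,4,1,1,0,0]

/-- `Matrix.diagonal Dvec * Qmat`, written out explicitly. -/
def DQmat : Matrix (Fin 8) (Fin 8) ℚ :=
  !![2,2,2,2,2,2,2,2;
     -4,-8/3,-4/3,0,2,2,2,2;
     -2/3,-2/3,-2/3,-2/3,1/3,5/9,7/9,1;
     1/3,1/3,1/3,1/3,-2/3,-4/9,-2/9,0;
     2,2/3,1/3,1,-1,-1,-1,-1;
     -1,-1,-1,-1,2,2/3,1/3,1;
     0,0,0,0,0,0,0,0;
     0,0,0,0,0,0,0,0]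

set_option maxHeartbeats 2000000 in
lemma hDQ : Matrix.diagonal Dvec * Qmat = DQmat := by
  ext i j
  fin_cases i <;> fin_cases j <;>
    norm_num [Dvec, Qmat, DQmat, Matrix.mul_apply, Fin.sum_univ_succ, Matrix.diagonal_apply]

set_option maxHeartbeats 2000000 in
lemma hPQ : Pmat * Qmat = 1 := by
  ext i j
  fin_cases i <;> fin_cases j <;>
    norm_num [Pmat, Qmat, Matrix.mul_apply, Fin.sum_univ_succ, Matrix.one_apply, Fin.ext_iff]

set_option maxHeartbeats 2000000 in
lemma hMP' : MP = Pmat * DQmat := by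
  ext i j
  fin_cases i <;> fin_cases j <;>
    norm_num [MP, Pmat, DQmat, Matrix.mul_apply, Fin.sum_univ_succ]

lemma hMP : MP = Pmat * Matrix.diagonal Dvec * Qmat := by
  rw [Matrix.mul_assoc, hDQ, hMP']

open Polynomial in
set_option maxHeartbeats 1000000 in
lemma hD : (Matrix.diagonal Dvec).charpoly
    = (X - C 16) * (X - C 4) ^ 3 * (X - C 1) ^ 2 * X ^ 2 := by
  rw [Matrix.charpoly_of_upperTriangular _ (Matrix.blockTriangular_diagonal _),
    Fin.prod_univ_eight]
  simp only [Matrix.diagonal_apply_eq, Dvec, Matrix.cons_val_zero, Matrix.cons_val_one,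
    Matrix.head_cons, Matrix.cons_val_two, Matrix.cons_val_three, Matrix.cons_val_four,
    cons_val_five, cons_val_six, cons_val_seven, Matrix.cons_val_succ,
    Matrix.vecHead, Matrix.vecTail, Function.comp, map_zero, map_one]
  ring

set_option maxHeartbeats 2000000 in
lemma sq : MP = Mplus * Mplus := by
  ext i j
  fin_cases i <;> fin_cases j <;>
    norm_num [MP, Mplus, Matrix.mul_apply, Fin.sum_univ_succ]

set_option maxHeartbeats 2000000 in
lemma pos : ∀ i j : Fin 8, 0 < (MP * MP) i j := by
  intro i j
  fin_cases i <;> fin_cases j <;>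
    norm_num [MP, Matrix.mul_apply, Fin.sum_univ_succ]

end MPaux

open Polynomial in
/-- `M_P = M₊²`, `M_P²` has strictly positive entries (so `M_P` is
primitive), and the eigenvalues of `M_P` with multiplicity are
`16, 4, 4, 4, 1, 1, 0, 0`. -/
theorem MP_primitive_and_eigenvalues :
    MP = Mplus * Mplus ∧
    (∀ i j : Fin 8, 0 < (MP * MP) i j) ∧
    MP.charpoly = (X - C 16) * (X - C 4) ^ 3 * (X - C 1) ^ 2 * X ^ 2 := by
  refine ⟨MPaux.sq, MPaux.pos, ?_⟩
  rw [MPaux.hMP, MPaux.charpoly_conj _ _ _ MPaux.hPQ]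
  exact MPaux.hD
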